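/- For every unit vector v ∈ ℂ⁴ indexed by (Fin 2 × Fin 2), there exists a 4×4 unitary matrix U such that U (v v†) U† is entangled (not separable), where v v† denotes the rank-one projection onto v. In particular, no pure two-qubit state is absolutely separable. -/

import Mathlib

open Matrix
open scoped Kronecker ComplexOrder

def IsDensityMatrix {n : Type*} [Fintype n] [DecidableEq n] (ρ : Matrix n n ℂ) : Prop :=
  ρ.PosSemidef ∧ ρ.trace = 1

/-- A bipartite density matrix is separable if it is a finite convex combination of
Kronecker products of density matrices. -/
def IsSeparableState {m n : ℕ} (ρ : Matrix (Fin m × Fin n) (Fin m × Fin n) ℂ) : Prop :=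
  ∃ (k : ℕ) (p : Fin k → ℝ) (σ : Fin k → Matrix (Fin m) (Fin m) ℂ)
    (τ : Fin k → Matrix (Fin n) (Fin n) ℂ),
    (∀ i, 0 ≤ p i) ∧ (∑ i, p i = 1) ∧
    (∀ i, IsDensityMatrix (σ i)) ∧ (∀ i, IsDensityMatrix (τ i)) ∧
    ρ = ∑ i, (p i : ℂ) • (σ i ⊗ₖ τ i)

/-! ### Auxiliary definitions and lemmas -/

noncomputable def bellVec : (Fin 2 × Fin 2) → ℂ := fun i =>
  if i = (0,0) ∨ i = (1,1) then ((Real.sqrt 2)⁻¹ : ℝ) else 0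

abbrev ι2 := Fin 2 × Fin 2

/-- The entanglement witness: the quadratic form of the partial transpose at the
singlet vector. -/
def Gfun (M : Matrix (Fin 2 × Fin 2) (Fin 2 × Fin 2) ℂ) : ℂ :=
  M (0,1) (0,1) + M (1,0) (1,0) - M (0,0) (1,1) - M (1,1) (0,0)

lemma kron_psd (σ τ : Matrix (Fin 2) (Fin 2) ℂ) (hσ : σ.PosSemidef) (hτ : τ.PosSemidef) :
    (σ ⊗ₖ τᵀ).PosSemidef := by
  obtain ⟨A, hA⟩ : ∃ A : Matrix (Fin 2) (Fin 2) ℂ, σ = Aᴴ * A :=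
    by open scoped MatrixOrder Matrix.Norms.L2Operator in
      exact CStarAlgebra.nonneg_iff_eq_star_mul_self.mp hσ.nonneg
  obtain ⟨B, hB⟩ : ∃ B : Matrix (Fin 2) (Fin 2) ℂ, τᵀ = Bᴴ * B :=
    by open scoped MatrixOrder Matrix.Norms.L2Operator in
      exact CStarAlgebra.nonneg_iff_eq_star_mul_self.mp hτ.transpose.nonneg
  have hct : (A ⊗ₖ B)ᴴ = Aᴴ ⊗ₖ Bᴴ := by
    ext ⟨a, e⟩ ⟨b, f⟩
    simp [conjTranspose_apply, star_mul']
  have h : σ ⊗ₖ τᵀ = (A ⊗ₖ B)ᴴ * (A ⊗ₖ B) := by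
    rw [hct, ← Matrix.mul_kronecker_mul, ← hA, ← hB]
  rw [h]
  exact Matrix.posSemidef_conjTranspose_mul_self _

lemma Gfun_nonneg (σ τ : Matrix (Fin 2) (Fin 2) ℂ) (hσ : σ.PosSemidef) (hτ : τ.PosSemidef) :
    0 ≤ Gfun (σ ⊗ₖ τ) := by
  classical
  set w : (Fin 2 × Fin 2) → ℂ := fun p => if p = (0,1) then 1 else if p = (1,0) then -1 else 0
    with hw
  have h := (kron_psd σ τ hσ hτ).dotProduct_mulVec_nonneg w
  have heq : star w ⬝ᵥ ((σ ⊗ₖ τᵀ) *ᵥ w) = Gfun (σ ⊗ₖ τ) := by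
    simp only [dotProduct, mulVec, Fintype.sum_prod_type, Fin.sum_univ_two, Gfun, hw,
      Pi.star_apply, kroneckerMap_apply, transpose_apply]
    norm_num [Prod.ext_iff]
    ring
  rwa [heq] at h

lemma Gfun_bell : Gfun (Matrix.of fun i j => bellVec i * star (bellVec j)) = -1 := by
  simp only [Gfun, Matrix.of_apply, bellVec]
  norm_num [Prod.ext_iff]
  have h : ((Real.sqrt 2 : ℝ) : ℂ) * ((Real.sqrt 2 : ℝ) : ℂ) = 2 := by
    norm_cast
    exact Real.mul_self_sqrt (by norm_num)
  rw [← mul_inv, h]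
  norm_num

lemma outer_conj (U : Matrix (Fin 2 × Fin 2) (Fin 2 × Fin 2) ℂ) (v : (Fin 2 × Fin 2) → ℂ) :
    U * (Matrix.of fun i j => v i * star (v j)) * Uᴴ
      = Matrix.of fun i j => (U *ᵥ v) i * star ((U *ᵥ v) j) := by
  ext i j
  simp only [mul_apply, Matrix.of_apply, conjTranspose_apply, mulVec, dotProduct,
    Fintype.sum_prod_type, Fin.sum_univ_two, star_add, star_mul']
  ring

/-- Any unit vector extends to an orthonormal basis with prescribed value at (0,0). -/
lemma exists_onb (u : ι2 → ℂ) (hu : ‖((WithLp.equiv 2 (ι2 → ℂ)).symm u)‖ = 1) :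
    ∃ b : OrthonormalBasis ι2 ℂ (EuclideanSpace ℂ ι2),
      b ((0,0) : ι2) = ((WithLp.equiv 2 (ι2 → ℂ)).symm u) := by
  have hcard : Module.finrank ℂ (EuclideanSpace ℂ ι2) = Fintype.card ι2 := by
    simp [finrank_euclideanSpace]
  have horth : Orthonormal ℂ
      (({((0,0) : ι2)} : Set ι2).restrict
        (fun _ : ι2 => ((WithLp.equiv 2 (ι2 → ℂ)).symm u))) := by
    constructor
    · intro i; exact hu
    · intro i j hij
      exact absurd (Subtype.ext (i.2.trans j.2.symm)) hij
  obtain ⟨b, hb⟩ := horth.exists_orthonormalBasis_extension_of_card_eq hcard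
  exact ⟨b, hb _ rfl⟩

lemma unit_norm (u : ι2 → ℂ) (hu : ∑ i, Complex.normSq (u i) = 1) :
    ‖((WithLp.equiv 2 (ι2 → ℂ)).symm u)‖ = 1 := by
  rw [EuclideanSpace.norm_eq]
  have : ∑ i, ‖(WithLp.equiv 2 (ι2 → ℂ)).symm u i‖ ^ 2 = 1 := by
    simpa [Complex.sq_norm] using hu
  rw [this, Real.sqrt_one]

lemma bell_normSq : ∑ i, Complex.normSq (bellVec i) = 1 := by
  have h2 : ((Real.sqrt 2)⁻¹ : ℝ) * (Real.sqrt 2)⁻¹ = 1/2 := by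
    rw [← mul_inv]
    norm_num [Real.mul_self_sqrt]
  simp only [Fintype.sum_prod_type, Fin.sum_univ_two, bellVec]
  norm_num [Prod.ext_iff, Complex.normSq_ofReal, h2]

/-- There is a unitary sending any unit vector to `bellVec`. -/
lemma exists_unitary (u : ι2 → ℂ) (hu : ∑ i, Complex.normSq (u i) = 1) :
    ∃ U ∈ Matrix.unitaryGroup ι2 ℂ, U *ᵥ u = bellVec := by
  obtain ⟨b₁, hb₁⟩ := exists_onb u (unit_norm u hu)
  obtain ⟨b₂, hb₂⟩ := exists_onb bellVec (unit_norm bellVec bell_normSq)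
  classical
  set M₁ : Matrix ι2 ι2 ℂ := fun i j => b₁ j i with hM₁def
  set M₂ : Matrix ι2 ι2 ℂ := fun i j => b₂ j i with hM₂def
  have key : ∀ (b : OrthonormalBasis ι2 ℂ (EuclideanSpace ℂ ι2)) (j k : ι2),
      (∑ x, star (b j x) * b k x) = if j = k then 1 else 0 := by
    intro b j k
    have := orthonormal_iff_ite.mp b.orthonormal j k
    rw [PiLp.inner_apply] at this
    simpa [RCLike.inner_apply, mul_comm] using this
  have hM₁ : M₁ᴴ * M₁ = 1 := by
    ext j k
    simp only [mul_apply, conjTranspose_apply]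
    simp only [hM₁def]
    rw [key b₁ j k]
    simp [Matrix.one_apply]
  have hM₂ : M₂ᴴ * M₂ = 1 := by
    ext j k
    simp only [mul_apply, conjTranspose_apply]
    simp only [hM₂def]
    rw [key b₂ j k]
    simp [Matrix.one_apply]
  refine ⟨M₂ * M₁ᴴ, ?_, ?_⟩
  · rw [Matrix.mem_unitaryGroup_iff]
    have : star (M₂ * M₁ᴴ) = M₁ * M₂ᴴ := by
      simp [star_eq_conjTranspose, conjTranspose_mul]
    rw [this, Matrix.mul_assoc, ← Matrix.mul_assoc M₁ᴴ, hM₁, Matrix.one_mul,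
      mul_eq_one_comm.mp hM₂]
  · have h1 : M₁ᴴ *ᵥ u = fun j => if j = ((0,0) : ι2) then 1 else 0 := by
      funext j
      have := key b₁ j ((0,0) : ι2)
      rw [hb₁] at this
      simp only [mulVec, dotProduct, conjTranspose_apply]
      simpa [hM₁def] using this
    rw [← Matrix.mulVec_mulVec, h1]
    funext i
    have : (M₂ *ᵥ fun j => if j = ((0,0) : ι2) then (1:ℂ) else 0) i = M₂ i ((0,0) : ι2) := by
      simp [mulVec, dotProduct]
    rw [this]
    show b₂ ((0,0) : ι2) i = bellVec i
    rw [hb₂]; rfl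

theorem no_pure_state_absolutely_separable (v : (Fin 2 × Fin 2) → ℂ)
    (hv : ∑ i, Complex.normSq (v i) = 1) :
    ∃ U ∈ Matrix.unitaryGroup (Fin 2 × Fin 2) ℂ,
      ¬ IsSeparableState (U * (Matrix.of fun i j => v i * star (v j)) * Uᴴ) := by
  obtain ⟨U, hU, hUv⟩ := exists_unitary v hv
  refine ⟨U, hU, ?_⟩
  rw [outer_conj, hUv]
  rintro ⟨k, p, σ, τ, hp0, -, hσ, hτ, hrep⟩
  have hlin : Gfun (∑ i, (p i : ℂ) • (σ i ⊗ₖ τ i)) = ∑ i, (p i : ℂ) * Gfun (σ i ⊗ₖ τ i) := by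
    simp only [Gfun, Matrix.sum_apply, Matrix.smul_apply, smul_eq_mul]
    rw [← Finset.sum_add_distrib, ← Finset.sum_sub_distrib, ← Finset.sum_sub_distrib]
    exact Finset.sum_congr rfl fun i _ => by ring
  have hpos : (0:ℂ) ≤ Gfun (Matrix.of fun i j => bellVec i * star (bellVec j)) := by
    rw [hrep, hlin]
    refine Finset.sum_nonneg fun i _ => mul_nonneg ?_ (Gfun_nonneg _ _ (hσ i).1 (hτ i).1)
    exact_mod_cast hp0 i
  rw [Gfun_bell] at hpos
  exact absurd hpos (by norm_num [Complex.le_def])
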